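/- arXiv:1709.07339 — 7 statements merged into one kernel-verified Lean document; each statement's English description precedes it below -/
import Mathlib

section
/- Let T be an effect-increasing statistic and suppose the true schedule S_h satisfies τ_i ≤ τ⁰_i for all i. Let p̃ = P(T(W*, S̃) ≥ t_obs) be the nominal permutation p-value computed from the schedule S̃ imputed under the sharp null τ = τ⁰, where t_obs = T(w_obs, S_h), and let p = P(T(W*, S_h) ≥ t_obs) be the true p-value. Then p̃ ≥ p pointwise (for every realized w_obs), and hence for any α ∈ [0,1], if P(p ≤ α) ≤ α then P(p̃ ≤ α) ≤ α: rejecting when p̃ ≤ α is a valid (conservative) level-α test of the bounded null. -/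
/-- A test statistic is effect-increasing. -/
def EffectIncreasing {n : ℕ}
    (T : (Fin n → Bool) → (Fin n → ℝ) → (Fin n → ℝ) → ℝ) : Prop :=
  ∀ (w : Fin n → Bool) (Y0 Y1 Y0' Y1' : Fin n → ℝ),
    (∀ i, Y1 i ≤ Y1' i) → (∀ i, Y0' i ≤ Y0 i) →
    T w Y0 Y1 ≤ T w Y0' Y1'

open Classical in
/-- with an effect-increasing statistic and a true schedule
satisfying τ_i ≤ τ⁰_i, the nominal p-value p̃ (computed from the schedule
imputed under the sharp null τ = τ⁰) dominates the true p-value p pointwise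
in the realized assignment, and consequently if rejecting when p ≤ α has
probability at most α then so does rejecting when p̃ ≤ α. -/
theorem conservative_test_of_bounded_null {n : ℕ}
    (T : (Fin n → Bool) → (Fin n → ℝ) → (Fin n → ℝ) → ℝ)
    (hT : EffectIncreasing T)
    (pr : (Fin n → Bool) → ℝ)
    (hpr : ∀ w, 0 ≤ pr w) (hsum : ∑ w, pr w = 1)
    (Y0 Y1 : Fin n → ℝ) (τ0 : Fin n → ℝ)
    (hbound : ∀ i, Y1 i - Y0 i ≤ τ0 i)
    -- imputed schedule as a function of the realized assignment
    (impY0 impY1 : (Fin n → Bool) → (Fin n → ℝ))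
    (himp0 : ∀ wobs i, impY0 wobs i = (if wobs i then Y1 i else Y0 i) - (if wobs i then τ0 i else 0))
    (himp1 : ∀ wobs i, impY1 wobs i = (if wobs i then Y1 i else Y0 i) + (if wobs i then 0 else τ0 i))
    -- nominal and true p-values as functions of the realized assignment
    (ptil p : (Fin n → Bool) → ℝ)
    (hptil : ∀ wobs, ptil wobs =
      ∑ w : Fin n → Bool, if T wobs Y0 Y1 ≤ T w (impY0 wobs) (impY1 wobs) then pr w else 0)
    (hp : ∀ wobs, p wobs =
      ∑ w : Fin n → Bool, if T wobs Y0 Y1 ≤ T w Y0 Y1 then pr w else 0) :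
    (∀ wobs, p wobs ≤ ptil wobs) ∧
    (∀ α : ℝ, 0 ≤ α → α ≤ 1 →
      (∑ wobs : Fin n → Bool, if p wobs ≤ α then pr wobs else 0) ≤ α →
      (∑ wobs : Fin n → Bool, if ptil wobs ≤ α then pr wobs else 0) ≤ α) := by
  have hdom : ∀ wobs w, T w Y0 Y1 ≤ T w (impY0 wobs) (impY1 wobs) := by
    intro wobs w
    apply hT
    · intro i
      rw [himp1]
      by_cases h : wobs i <;> simp [h] <;> linarith [hbound i]
    · intro i
      rw [himp0]
      by_cases h : wobs i <;> simp [h] <;> linarith [hbound i]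
  have hple : ∀ wobs, p wobs ≤ ptil wobs := by
    intro wobs
    rw [hp, hptil]
    apply Finset.sum_le_sum
    intro w _
    by_cases h : T wobs Y0 Y1 ≤ T w Y0 Y1
    · simp [h, le_trans h (hdom wobs w)]
    · by_cases h2 : T wobs Y0 Y1 ≤ T w (impY0 wobs) (impY1 wobs) <;>
        simp [h, h2, hpr w]
  refine ⟨hple, fun α h0 h1 hα => ?_⟩
  have step : (∑ wobs : Fin n → Bool, if ptil wobs ≤ α then pr wobs else 0) ≤
      (∑ wobs : Fin n → Bool, if p wobs ≤ α then pr wobs else 0) := by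
    apply Finset.sum_le_sum
    intro wobs _
    by_cases h : ptil wobs ≤ α
    · have hp' : p wobs ≤ α := le_trans (hple wobs) h
      simp [h, hp']
    · rw [if_neg h]
      split <;> [exact hpr wobs; exact le_refl (0:ℝ)]
  exact le_trans step hα
end

section
/- For an effect-increasing test statistic, the one-sided permutation p-value under the sharp null of a constant effect is monotone non-increasing in the hypothesized constant: if τ¹ ≤ τ² are real numbers and p(τ) denotes the permutation p-value P(T(W*, S̃_τ) ≥ t_obs) computed from the schedule imputed under the constant-effect sharp null τ_i = τ for all i, then p(τ¹) ≤ p(τ²). -/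
open Classical in
/-- for an effect-increasing statistic, the one-sided
permutation p-value under the constant-effect sharp null τ_i = τ ∀i is
monotone non-increasing in the hypothesized constant τ (i.e., non-decreasing
as a function of τ in the direction of the ordering: τ¹ ≤ τ² ⇒ p(τ¹) ≤ p(τ²)). -/
theorem constant_effect_p_value_monotone {n : ℕ}
    (T : (Fin n → Bool) → (Fin n → ℝ) → (Fin n → ℝ) → ℝ)
    (hT : EffectIncreasing T)
    (pr : (Fin n → Bool) → ℝ) (hpr : ∀ w, 0 ≤ pr w)
    (wobs : Fin n → Bool) (yobs : Fin n → ℝ) (tobs : ℝ)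
    (p : ℝ → ℝ)
    (hpdef : ∀ τ : ℝ, p τ =
      ∑ w : Fin n → Bool,
        if tobs ≤ T w (fun i => yobs i - (if wobs i then τ else 0))
                      (fun i => yobs i + (if wobs i then 0 else τ))
        then pr w else 0) :
    ∀ τ1 τ2 : ℝ, τ1 ≤ τ2 → p τ1 ≤ p τ2 := by
  intro τ1 τ2 h
  rw [hpdef τ1, hpdef τ2]
  apply Finset.sum_le_sum
  intro w _
  by_cases hc : tobs ≤ T w (fun i => yobs i - (if wobs i then τ1 else 0))
      (fun i => yobs i + (if wobs i then 0 else τ1))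
  · have hmono : T w (fun i => yobs i - (if wobs i then τ1 else 0))
        (fun i => yobs i + (if wobs i then 0 else τ1)) ≤
        T w (fun i => yobs i - (if wobs i then τ2 else 0))
        (fun i => yobs i + (if wobs i then 0 else τ2)) := by
      apply hT
      · intro i; split <;> linarith
      · intro i; split <;> linarith
    simp only [if_pos hc, if_pos (le_trans hc hmono)]; exact le_refl _
  · simp only [if_neg hc]
    split <;> [exact hpr w; exact le_refl 0]
end

section
/- For continuous (tie-free) outcomes, any rank statistic of the form T(w, Y) = a(w)·Σ_i w_i Q(R_i) − b(w)·Σ_i (1−w_i) Q(R_i), where R_i is the rank of the observed outcome Y_i among all n observed outcomes, Q is non-decreasing, and a(w), b(w) ≥ 0, is effect-increasing: if S ⪯ S' and all observed outcomes within each schedule are distinct, then T(w, S) ≤ T(w, S') for every assignment vector w. -/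
open Finset

/-- The rank of observed outcome `Yobs i` among all observed outcomes:
the number of units j with Yobs j ≤ Yobs i. With distinct outcomes this is
the position in the increasing ordering. -/
noncomputable def rankOf {n : ℕ} (Yobs : Fin n → ℝ) (i : Fin n) : ℕ :=
  (univ.filter (fun j => Yobs j ≤ Yobs i)).card

namespace RankAux
variable {n : ℕ}

lemma rank_le (Y : Fin n → ℝ) (i : Fin n) : rankOf Y i ≤ n := by
  simpa [rankOf] using (card_filter_le univ (fun j => Y j ≤ Y i))

lemma rank_mono (Y : Fin n → ℝ) {i j : Fin n} (h : Y i ≤ Y j) :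
    rankOf Y i ≤ rankOf Y j := by
  apply card_le_card
  intro l hl
  simp only [mem_filter, mem_univ, true_and] at *
  exact hl.trans h

lemma exchange {s : ℕ} (T : Finset (Fin n)) (f : Fin n → ℝ) (A' : Finset (Fin n))
    (hA' : A' ∈ T.powersetCard s)
    (hmax : ∀ B ∈ T.powersetCard s, ∑ x ∈ B, f x ≤ ∑ x ∈ A', f x)
    {i j : Fin n} (hi : i ∈ A') (hj : j ∈ T) (hjA : j ∉ A') : f j ≤ f i := by
  rw [mem_powersetCard] at hA'
  have hje : j ∉ A'.erase i := fun h => hjA (mem_of_mem_erase h)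
  have hB : insert j (A'.erase i) ∈ T.powersetCard s := by
    rw [mem_powersetCard]
    constructor
    · exact insert_subset hj ((erase_subset _ _).trans hA'.1)
    · rw [card_insert_of_notMem hje, card_erase_of_mem hi, hA'.2]
      have : 1 ≤ s := hA'.2 ▸ card_pos.mpr ⟨i, hi⟩
      omega
  have h1 := hmax _ hB
  rw [sum_insert hje] at h1
  have h2 : f i + ∑ x ∈ A'.erase i, f x = ∑ x ∈ A', f x := add_sum_erase _ f hi
  linarith

end RankAux

namespace RankAux
variable {n : ℕ}

lemma count_lemma (w : Fin n → Bool) (Y Y' : Fin n → ℝ)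
    (hT : ∀ i, w i = true → Y i ≤ Y' i) (hC : ∀ i, w i = false → Y' i ≤ Y i)
    (hI : Function.Injective Y) (hI' : Function.Injective Y') (k : ℕ) :
    (univ.filter (fun i => w i = true ∧ k ≤ rankOf Y i)).card ≤
    (univ.filter (fun i => w i = true ∧ k ≤ rankOf Y' i)).card := by
  set A := univ.filter (fun i => w i = true ∧ k ≤ rankOf Y i) with hA
  set s := A.card with hs
  set T := univ.filter (fun i => w i = true) with hTdef
  have hAT : A ⊆ T := by
    intro x hx; simp only [hA, hTdef, mem_filter, mem_univ, true_and] at *; exact hx.1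
  have hsT : s ≤ T.card := card_le_card hAT
  -- choose A' : top-s subset of T by Y'
  obtain ⟨A', hA'mem, hmax⟩ := Finset.exists_max_image (T.powersetCard s)
    (fun B => ∑ x ∈ B, Y' x) (powersetCard_nonempty.mpr hsT)
  have hA'sub : A' ⊆ T := (mem_powersetCard.mp hA'mem).1
  have hA'card : A'.card = s := (mem_powersetCard.mp hA'mem).2
  -- it suffices A' ⊆ target filter
  have key : A' ⊆ univ.filter (fun i => w i = true ∧ k ≤ rankOf Y' i) := by
    intro i hi
    have hwi : w i = true := by
      have := hA'sub hi; simpa [hTdef] using this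
    simp only [mem_filter, mem_univ, true_and]
    refine ⟨hwi, ?_⟩
    -- find i* ∈ A with Y' i* ≤ Y' i
    have hApos : A.Nonempty := by
      have h0 : 0 < A'.card := card_pos.mpr ⟨i, hi⟩
      rw [hA'card] at h0
      exact card_pos.mp h0
    obtain ⟨istar, histar, hYstar⟩ : ∃ j ∈ A, Y' j ≤ Y' i := by
      by_cases hAA : A ⊆ A'
      · have : A = A' := eq_of_subset_of_card_le hAA (le_of_eq hA'card)
        exact ⟨i, this ▸ hi, le_refl _⟩
      · obtain ⟨j, hjA, hjA'⟩ := not_subset.mp hAA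
        exact ⟨j, hjA, exchange T Y' A' hA'mem hmax hi (hAT hjA) hjA'⟩
    have histar' : w istar = true ∧ k ≤ rankOf Y istar := by
      simpa [hA] using histar
    -- the complement of the below-set of i in Y'
    set Dc := univ.filter (fun j => ¬ (Y' j ≤ Y' i)) with hDc
    set UC := univ.filter (fun j => w j = false ∧ k ≤ rankOf Y j) with hUC
    have hsplit : Dc ⊆ (A'.erase i) ∪ UC := by
      intro j hj
      have hji : Y' i < Y' j := by
        have := (mem_filter.mp hj).2; exact lt_of_not_ge this
      rcases Bool.eq_false_or_eq_true (w j) with hw | hw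
      · -- treated: must be in A'.erase i
        apply mem_union_left
        have hjA' : j ∈ A' := by
          by_contra hjn
          have : Y' j ≤ Y' i := exchange T Y' A' hA'mem hmax hi (by simp [hTdef, hw]) hjn
          exact absurd this (not_le.mpr hji)
        refine mem_erase.mpr ⟨?_, hjA'⟩
        intro hji'; exact absurd hji (hji' ▸ lt_irrefl _)
      · -- control: goes to UC
        apply mem_union_right
        have hYj : Y istar < Y j := by
          calc Y istar ≤ Y' istar := hT istar histar'.1
          _ ≤ Y' i := hYstar
          _ < Y' j := hji
          _ ≤ Y j := hC j hw
        simp only [hUC, mem_filter, mem_univ, true_and]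
        exact ⟨hw, le_trans histar'.2 (rank_mono Y (le_of_lt hYj))⟩
    -- cardinality arithmetic
    have hdisj : Disjoint (A'.erase i) UC := by
      rw [disjoint_left]
      intro x hx hxU
      have h1 : w x = true := by
        have := hA'sub (mem_of_mem_erase hx); simpa [hTdef] using this
      have h2 : w x = false := by
        simpa [hUC] using (mem_filter.mp hxU).2.1
      simp [h1] at h2
    have hcardsplit : Dc.card ≤ (s - 1) + UC.card := by
      calc Dc.card ≤ ((A'.erase i) ∪ UC).card := card_le_card hsplit
      _ = (A'.erase i).card + UC.card := card_union_of_disjoint hdisj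
      _ = (s - 1) + UC.card := by rw [card_erase_of_mem hi, hA'card]
    -- UC ∪ A ⊆ U and they are disjoint
    set U := univ.filter (fun j => k ≤ rankOf Y j) with hU
    have hdisj2 : Disjoint UC A := by
      rw [disjoint_left]
      intro x hx hxA
      have h2 : w x = false := by simpa [hUC] using (mem_filter.mp hx).2.1
      have h1 : w x = true := by simpa [hA] using (mem_filter.mp hxA).2.1
      simp [h1] at h2
    have hsubU : UC ∪ A ⊆ U := by
      intro x hx
      simp only [hU, mem_filter, mem_univ, true_and]
      rcases mem_union.mp hx with h | h
      · exact ((mem_filter.mp h).2).2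
      · exact ((mem_filter.mp h).2).2
    have hUCcard : UC.card + s ≤ U.card := by
      calc UC.card + s = (UC ∪ A).card := (card_union_of_disjoint hdisj2).symm
      _ ≤ U.card := card_le_card hsubU
    -- ranks are injective on U, all in [k, n]
    have hrinj : Set.InjOn (rankOf Y) U := by
      intro x hx y hy hxy
      rcases lt_trichotomy (Y x) (Y y) with h | h | h
      · exfalso
        have hss : univ.filter (fun l => Y l ≤ Y x) ⊂ univ.filter (fun l => Y l ≤ Y y) := by
          refine Finset.ssubset_iff_of_subset ?_ |>.mpr ?_
          · intro l hl
            simp only [mem_filter, mem_univ, true_and] at *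
            exact hl.trans (le_of_lt h)
          · exact ⟨y, by simp, by simp [not_le.mpr h]⟩
        exact absurd hxy (Nat.ne_of_lt (card_lt_card hss))
      · exact hI h
      · exfalso
        have hss : univ.filter (fun l => Y l ≤ Y y) ⊂ univ.filter (fun l => Y l ≤ Y x) := by
          refine Finset.ssubset_iff_of_subset ?_ |>.mpr ?_
          · intro l hl
            simp only [mem_filter, mem_univ, true_and] at *
            exact hl.trans (le_of_lt h)
          · exact ⟨x, by simp, by simp [not_le.mpr h]⟩
        exact absurd hxy.symm (Nat.ne_of_lt (card_lt_card hss))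
    have hUcard : U.card ≤ n + 1 - k := by
      have himg : U.image (rankOf Y) ⊆ Finset.Icc k n := by
        intro r hr
        obtain ⟨x, hx, rfl⟩ := mem_image.mp hr
        exact Finset.mem_Icc.mpr ⟨by simpa [hU] using (mem_filter.mp hx).2, rank_le Y x⟩
      calc U.card = (U.image (rankOf Y)).card := (Finset.card_image_of_injOn hrinj).symm
      _ ≤ (Finset.Icc k n).card := card_le_card himg
      _ = n + 1 - k := by rw [Nat.card_Icc]
    have hkn : k ≤ n := le_trans histar'.2 (rank_le Y istar)
    have hspos : 1 ≤ s := hA'card ▸ card_pos.mpr ⟨i, hi⟩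
    have hpart : (univ.filter (fun j => Y' j ≤ Y' i)).card + Dc.card = n := by
      have := Finset.card_filter_add_card_filter_not (s := (univ : Finset (Fin n)))
        (p := fun j => Y' j ≤ Y' i)
      simpa [hDc] using this
    have : rankOf Y' i = (univ.filter (fun j => Y' j ≤ Y' i)).card := rfl
    omega
  calc s = A'.card := hA'card.symm
  _ ≤ _ := card_le_card key

end RankAux

namespace RankAux
variable {n : ℕ}

lemma Q_rank_expand (Q : ℕ → ℝ) (Y : Fin n → ℝ) (i : Fin n) :
    Q (rankOf Y i) = Q 0 + ∑ t ∈ Finset.range n,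
      (if t + 1 ≤ rankOf Y i then Q (t+1) - Q t else 0) := by
  have h1 : (Finset.range n).filter (fun t => t + 1 ≤ rankOf Y i)
      = Finset.range (rankOf Y i) := by
    ext t
    simp only [Finset.mem_filter, Finset.mem_range]
    have := rank_le Y i
    omega
  rw [← Finset.sum_filter, h1, Finset.sum_range_sub (fun t => Q t)]
  ring

lemma sum_mono (Q : ℕ → ℝ) (hQ : Monotone Q) (w : Fin n → Bool) (Y Y' : Fin n → ℝ)
    (hT : ∀ i, w i = true → Y i ≤ Y' i) (hC : ∀ i, w i = false → Y' i ≤ Y i)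
    (hI : Function.Injective Y) (hI' : Function.Injective Y') :
    ∑ i ∈ univ.filter (fun i => w i = true), Q (rankOf Y i) ≤
    ∑ i ∈ univ.filter (fun i => w i = true), Q (rankOf Y' i) := by
  have expand : ∀ Z : Fin n → ℝ,
      ∑ i ∈ univ.filter (fun i => w i = true), Q (rankOf Z i)
      = (univ.filter (fun i => w i = true)).card * Q 0
        + ∑ t ∈ Finset.range n, (Q (t+1) - Q t) *
            ((univ.filter (fun i => w i = true ∧ t + 1 ≤ rankOf Z i)).card : ℝ) := by
    intro Z
    simp only [Q_rank_expand Q Z]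
    rw [Finset.sum_add_distrib, Finset.sum_const, Finset.sum_comm]
    congr 1
    · simp [nsmul_eq_mul]
    · apply Finset.sum_congr rfl
      intro t _
      rw [Finset.sum_ite, Finset.sum_const_zero, Finset.sum_const, add_zero,
        Finset.filter_filter, nsmul_eq_mul, mul_comm]
  rw [expand Y, expand Y']
  apply add_le_add le_rfl
  apply Finset.sum_le_sum
  intro t _
  apply mul_le_mul_of_nonneg_left
  · exact_mod_cast Nat.cast_le.mpr (count_lemma w Y Y' hT hC hI hI' (t+1))
  · have := hQ (Nat.le_succ t); linarith

lemma rank_neg (Y : Fin n → ℝ) (hI : Function.Injective Y) (i : Fin n) :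
    rankOf (fun j => -Y j) i + rankOf Y i = n + 1 := by
  have h1 : rankOf (fun j => -Y j) i = (univ.filter (fun j => Y i ≤ Y j)).card := by
    unfold rankOf
    congr 1
    ext j
    simp [neg_le_neg_iff]
  rw [h1]
  unfold rankOf
  have hunion : (univ.filter (fun j => Y i ≤ Y j)) ∪ (univ.filter (fun j => Y j ≤ Y i))
      = univ := by
    ext j; simp [le_total (Y i) (Y j)]
  have hinter : (univ.filter (fun j => Y i ≤ Y j)) ∩ (univ.filter (fun j => Y j ≤ Y i))
      = {i} := by
    ext j
    simp only [Finset.mem_inter, Finset.mem_filter, Finset.mem_univ, true_and,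
      Finset.mem_singleton]
    constructor
    · rintro ⟨h1, h2⟩; exact hI (le_antisymm h2 h1)
    · rintro rfl; exact ⟨le_refl _, le_refl _⟩
  have := Finset.card_union_add_card_inter (univ.filter (fun j => Y i ≤ Y j))
    (univ.filter (fun j => Y j ≤ Y i))
  rw [hunion, hinter] at this
  simp at this
  omega

end RankAux

namespace RankAux
variable {n : ℕ}

lemma sum_mono_control (Q : ℕ → ℝ) (hQ : Monotone Q) (w : Fin n → Bool) (Y Y' : Fin n → ℝ)
    (hT : ∀ i, w i = true → Y i ≤ Y' i) (hC : ∀ i, w i = false → Y' i ≤ Y i)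
    (hI : Function.Injective Y) (hI' : Function.Injective Y') :
    ∑ i ∈ univ.filter (fun i => w i = false), Q (rankOf Y' i) ≤
    ∑ i ∈ univ.filter (fun i => w i = false), Q (rankOf Y i) := by
  set Qt : ℕ → ℝ := fun t => -Q (n + 1 - t) with hQt
  have hQtmono : Monotone Qt := by
    intro r r' hr
    simp only [hQt, neg_le_neg_iff]
    exact hQ (Nat.sub_le_sub_left hr (n+1))
  have hInegY : Function.Injective (fun j => -Y j) := fun x y h => hI (by
    simpa using congrArg Neg.neg h)
  have hInegY' : Function.Injective (fun j => -Y' j) := fun x y h => hI' (by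
    simpa using congrArg Neg.neg h)
  have key := sum_mono Qt hQtmono (fun i => !w i) (fun j => -Y j) (fun j => -Y' j)
    (fun i hi => by
      have hw : w i = false := by simpa using hi
      simpa using hC i hw)
    (fun i hi => by
      have hw : w i = true := by simpa using hi
      simpa using hT i hw)
    hInegY hInegY'
  have hfilter : univ.filter (fun i => (!w i) = true) = univ.filter (fun i => w i = false) := by
    ext i; simp
  rw [hfilter] at key
  have hrw : ∀ i, Qt (rankOf (fun j => -Y j) i) = -Q (rankOf Y i) := fun i => by
    have h := rank_neg Y hI i
    simp only [hQt]
    congr 2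
    omega
  have hrw' : ∀ i, Qt (rankOf (fun j => -Y' j) i) = -Q (rankOf Y' i) := fun i => by
    have h := rank_neg Y' hI' i
    simp only [hQt]
    congr 2
    omega
  simp only [hrw, hrw', Finset.sum_neg_distrib, neg_le_neg_iff] at key
  exact key

end RankAux



/-- for tie-free outcomes, rank statistics
T(w,Y) = a(w)·Σ w_i Q(R_i) − b(w)·Σ (1−w_i) Q(R_i), with Q non-decreasing
and a(w), b(w) ≥ 0, are effect-increasing. -/
theorem rank_statistic_effect_increasing {n : ℕ}
    (Q : ℕ → ℝ) (hQ : Monotone Q)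
    (a b : (Fin n → Bool) → ℝ)
    (ha : ∀ w, 0 ≤ a w) (hb : ∀ w, 0 ≤ b w)
    (Y0 Y1 Y0' Y1' : Fin n → ℝ)
    (h1 : ∀ i, Y1 i ≤ Y1' i) (h0 : ∀ i, Y0' i ≤ Y0 i) :
    ∀ w : Fin n → Bool,
      Function.Injective (fun i => if w i then Y1 i else Y0 i) →
      Function.Injective (fun i => if w i then Y1' i else Y0' i) →
      a w * (∑ i, if w i then Q (rankOf (fun j => if w j then Y1 j else Y0 j) i) else 0)
        - b w * (∑ i, if w i then 0 else Q (rankOf (fun j => if w j then Y1 j else Y0 j) i))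
      ≤ a w * (∑ i, if w i then Q (rankOf (fun j => if w j then Y1' j else Y0' j) i) else 0)
        - b w * (∑ i, if w i then 0 else Q (rankOf (fun j => if w j then Y1' j else Y0' j) i)) := by
  intro w hI hI'
  set Y : Fin n → ℝ := fun i => if w i then Y1 i else Y0 i with hY
  set Y' : Fin n → ℝ := fun i => if w i then Y1' i else Y0' i with hY'
  have hTc : ∀ i, w i = true → Y i ≤ Y' i := fun i hw => by simp [hY, hY', hw, h1 i]
  have hCc : ∀ i, w i = false → Y' i ≤ Y i := fun i hw => by simp [hY, hY', hw, h0 i]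
  have htreat : ∀ (Z : Fin n → ℝ),
      (∑ i, if w i then Q (rankOf Z i) else 0)
        = ∑ i ∈ univ.filter (fun i => w i = true), Q (rankOf Z i) := by
    intro Z
    rw [Finset.sum_filter]
  have hctrl : ∀ (Z : Fin n → ℝ),
      (∑ i, if w i then (0:ℝ) else Q (rankOf Z i))
        = ∑ i ∈ univ.filter (fun i => w i = false), Q (rankOf Z i) := by
    intro Z
    rw [Finset.sum_filter]
    apply Finset.sum_congr rfl
    intro i _
    cases hw : w i <;> simp [hw]
  rw [htreat Y, htreat Y', hctrl Y, hctrl Y']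
  have hT := RankAux.sum_mono Q hQ w Y Y' hTc hCc hI hI'
  have hC := RankAux.sum_mono_control Q hQ w Y Y' hTc hCc hI hI'
  have := mul_le_mul_of_nonneg_left hT (ha w)
  have := mul_le_mul_of_nonneg_left hC (hb w)
  linarith
end

section
/- Key step for rank statistics: suppose schedules S' ⪯ S differ only in that one treated unit k has Y'_k(1) ≤ Y_k(1) (all other potential outcomes equal). Fix an assignment w with w_k = 1 and assume no ties in observed ranks. Let G = {j : R'_j > R_j and w_j = 1} be the treated units whose ranks increase when Y_k(1) is lowered, with elements j_1,…,j_m ordered by increasing original rank. Then for any non-decreasing Q: Q(R'_k) + Σ_{a=1}^m Q(R'_{j_a}) ≤ Q(R_k) + Σ_{a=1}^m Q(R_{j_a}); that is, the sum of transformed ranks over treated units does not increase. -/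
/-- key step for rank statistics: when one treated unit k's
observed value is lowered, its rank can only decrease (Rk' ≤ Rk); the treated
units j_1 < … < j_m (ordered by original rank) whose ranks increase satisfy
the interleaving R'_{j_a} ≤ R_{j_{a+1}}, R'_{j_m} ≤ R_k, and R'_k ≤ R_{j_1}.
Then for any non-decreasing Q, the sum of transformed ranks over these
treated units does not increase. -/
theorem rank_key_step (m : ℕ) (Q : ℕ → ℝ) (hQ : Monotone Q)
    (Rk Rk' : ℕ) (R R' : Fin m → ℕ)
    (hchain : ∀ (a : Fin m) (h : (a : ℕ) + 1 < m), R' a ≤ R ⟨(a : ℕ) + 1, h⟩)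
    (hlast : ∀ h : 0 < m, R' ⟨m - 1, Nat.sub_lt h one_pos⟩ ≤ Rk)
    (hfirst : ∀ h : 0 < m, Rk' ≤ R ⟨0, h⟩)
    (hk : Rk' ≤ Rk) :
    Q Rk' + ∑ a, Q (R' a) ≤ Q Rk + ∑ a, Q (R a) := by
  have key : ∑ i : Fin (m + 1), (Fin.cons (Q Rk') (fun a => Q (R' a)) : Fin (m+1) → ℝ) i
      ≤ ∑ i : Fin (m + 1), (Fin.snoc (fun a => Q (R a)) (Q Rk) : Fin (m+1) → ℝ) i := by
    apply Finset.sum_le_sum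
    intro i _
    induction i using Fin.cases with
    | zero =>
      rcases Nat.eq_zero_or_pos m with hm | hm
      · subst hm
        have h0 : (0 : Fin 1) = Fin.last 0 := rfl
        simp only [Fin.cons_zero, h0, Fin.snoc_last]
        exact hQ hk
      · have h0 : (Fin.snoc (fun a => Q (R a)) (Q Rk) : Fin (m+1) → ℝ) 0 = Q (R ⟨0, hm⟩) :=
          Fin.snoc_castSucc _ _ ⟨0, hm⟩
        rw [Fin.cons_zero, h0]
        exact hQ (hfirst hm)
    | succ a =>
      rw [Fin.cons_succ]
      rcases lt_or_eq_of_le (Nat.succ_le_of_lt a.isLt) with h | h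
      · have hs : a.succ = Fin.castSucc ⟨(a : ℕ) + 1, h⟩ := rfl
        rw [hs, Fin.snoc_castSucc]
        exact hQ (hchain a h)
      · have hs : a.succ = Fin.last m := by ext; simpa using h
        rw [hs, Fin.snoc_last]
        have ha : a = ⟨m - 1, Nat.sub_lt (by omega) one_pos⟩ := by
          ext; simp; omega
        rw [ha]
        exact hQ (hlast (by omega))
  rw [Fin.sum_univ_succ, Fin.sum_univ_castSucc, Fin.cons_zero,
    Fin.snoc_last, add_comm (∑ _, _)] at key
  simpa only [Fin.cons_succ, Fin.snoc_castSucc] using key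
end

section
/- The Mann–Whitney statistic T(w, S) = Σ_{i,j} w_i (1−w_j) · I(Y_i(1) − δ ≥ Y_j(0)), with I(a ≥ b) counted as 1/2 when a = b, is effect-increasing even in the presence of ties: if S ⪯ S' then T(w, S) ≤ T(w, S') for every assignment vector w and every fixed shift δ ∈ ℝ. -/
open Classical in
/-- The tie-adjusted indicator I(x ≥ y): 1 if x > y, 1/2 if x = y, 0 if x < y. -/
noncomputable def tieInd (x y : ℝ) : ℝ :=
  if y < x then 1 else if x = y then 1 / 2 else 0

lemma tieInd_mono {x x' y y' : ℝ} (hx : x ≤ x') (hy : y' ≤ y) :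
    tieInd x y ≤ tieInd x' y' := by
  unfold tieInd
  split_ifs with a b c d e f g <;> try norm_num
  all_goals try linarith
  all_goals
    first
    | exact absurd (le_antisymm (not_lt.1 c) (by linarith)) d
    | exact absurd (le_antisymm (not_lt.1 e) (by linarith)) f

/-- the Mann–Whitney statistic
T(w,S) = Σ_{i,j} w_i (1−w_j) I(Y_i(1) − δ ≥ Y_j(0)) (with ties counted 1/2)
is effect-increasing, even in the presence of ties. -/
theorem mann_whitney_effect_increasing {n : ℕ} (δ : ℝ)
    (Y0 Y1 Y0' Y1' : Fin n → ℝ)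
    (h1 : ∀ i, Y1 i ≤ Y1' i) (h0 : ∀ i, Y0' i ≤ Y0 i) :
    ∀ w : Fin n → Bool,
      (∑ i, ∑ j, if w i ∧ ¬ w j then tieInd (Y1 i - δ) (Y0 j) else 0)
      ≤ (∑ i, ∑ j, if w i ∧ ¬ w j then tieInd (Y1' i - δ) (Y0' j) else 0) := by
  intro w
  refine Finset.sum_le_sum fun i _ => Finset.sum_le_sum fun j _ => ?_
  split_ifs
  · exact tieInd_mono (by linarith [h1 i]) (h0 j)
  · exact le_refl 0
end

section
/- The Stephenson subset statistic T_S(w, S) = Σ_{G ∈ 𝒢} H_G, where 𝒢 is the collection of all size-s subsets of {1,…,n} and H_G = 1 if some treated unit i ∈ G (w_i = 1) satisfies Y_i^obs ≥ max_{j∈G} Y_j^obs and H_G = 0 otherwise, is effect-increasing (even with ties): S ⪯ S' implies T_S(w, S) ≤ T_S(w, S') for every assignment vector w. -/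
open Finset Classical in
/-- the Stephenson subset statistic T_S(w,S) = Σ_{G} H_G, where
G ranges over all size-s subsets and H_G = 1 iff some treated unit in G is
(tied for) the largest observed outcome in G, is effect-increasing, even with
ties. -/
theorem stephenson_statistic_effect_increasing {n : ℕ} (s : ℕ) (hs : 2 ≤ s)
    (Y0 Y1 Y0' Y1' : Fin n → ℝ)
    (h1 : ∀ i, Y1 i ≤ Y1' i) (h0 : ∀ i, Y0' i ≤ Y0 i) :
    ∀ w : Fin n → Bool,
      (∑ G ∈ (univ : Finset (Fin n)).powersetCard s,
        if ∃ i ∈ G, w i = true ∧ ∀ j ∈ G,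
            (if w j then Y1 j else Y0 j) ≤ (if w i then Y1 i else Y0 i)
        then (1 : ℝ) else 0)
      ≤ (∑ G ∈ (univ : Finset (Fin n)).powersetCard s,
        if ∃ i ∈ G, w i = true ∧ ∀ j ∈ G,
            (if w j then Y1' j else Y0' j) ≤ (if w i then Y1' i else Y0' i)
        then (1 : ℝ) else 0) := by
  intro w
  apply Finset.sum_le_sum
  intro G _
  split_ifs with h h'
  · exact le_refl 1
  · exfalso
    apply h'
    obtain ⟨i, hiG, hiw, hmax⟩ := h
    -- pick treated unit in G maximizing Y1'
    have hne : (G.filter (fun j => w j = true)).Nonempty := ⟨i, by simp [hiG, hiw]⟩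
    obtain ⟨k, hk, hkmax⟩ := Finset.exists_max_image _ Y1' hne
    simp only [Finset.mem_filter] at hk
    refine ⟨k, hk.1, hk.2, fun j hj => ?_⟩
    rw [if_pos hk.2]
    by_cases hwj : w j = true
    · rw [if_pos hwj]
      exact hkmax j (Finset.mem_filter.2 ⟨hj, hwj⟩)
    · rw [if_neg hwj]
      have h2 : Y0 j ≤ Y1 i := by
        have := hmax j hj
        rwa [if_neg hwj, if_pos hiw] at this
      calc Y0' j ≤ Y0 j := h0 j
        _ ≤ Y1 i := h2
        _ ≤ Y1' i := h1 i
        _ ≤ Y1' k := hkmax i (Finset.mem_filter.2 ⟨hiG, hiw⟩)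
  · norm_num
  · exact le_refl 0
end

section
/- The studentized difference of means is not effect-increasing: there exist potential-outcome schedules S ⪯ S' and an assignment vector w such that t(w, S) > t(w, S'), where t = (Ȳ_T − Ȳ_C)/√(s²_T/n_T + s²_C/n_C) with Ȳ_T, s²_T the mean and sample variance of treated observed outcomes and Ȳ_C, s²_C those of control observed outcomes. -/
open Finset

/-- Mean of `Y` over a finite set of units. -/
noncomputable def fmean {n : ℕ} (s : Finset (Fin n)) (Y : Fin n → ℝ) : ℝ :=
  (∑ i ∈ s, Y i) / s.card

/-- Sample variance of `Y` over a finite set of units. -/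
noncomputable def svar {n : ℕ} (s : Finset (Fin n)) (Y : Fin n → ℝ) : ℝ :=
  (∑ i ∈ s, (Y i - fmean s Y) ^ 2) / (s.card - 1)

/-- The studentized difference of means
t = (Ȳ_T − Ȳ_C)/√(s²_T/n_T + s²_C/n_C). -/
noncomputable def tStat {n : ℕ} (w : Fin n → Bool) (Y0 Y1 : Fin n → ℝ) : ℝ :=
  (fmean (univ.filter (fun i => w i = true)) Y1
      - fmean (univ.filter (fun i => w i = false)) Y0)
    / Real.sqrt
        (svar (univ.filter (fun i => w i = true)) Y1
            / (univ.filter (fun i => w i = true)).card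
          + svar (univ.filter (fun i => w i = false)) Y0
            / (univ.filter (fun i => w i = false)).card)

/-- auxiliary: the assignment -/
def myW : Fin 4 → Bool := fun i => decide (i.val < 2)

noncomputable def Yc : Fin 4 → ℝ := fun i => if i = 3 then 8 else 0
noncomputable def Yt : Fin 4 → ℝ := fun i => if i = 0 then 10 else if i = 1 then 16 else 0
noncomputable def Yt' : Fin 4 → ℝ := fun i => if i = 0 then 10 else if i = 1 then 1000 else 0

lemma hTset : (univ.filter (fun i : Fin 4 => myW i = true)) = {0,1} := by decide
lemma hCset : (univ.filter (fun i : Fin 4 => myW i = false)) = {2,3} := by decide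

lemma pair_sum01 (f : Fin 4 → ℝ) : ∑ i ∈ ({0,1} : Finset (Fin 4)), f i = f 0 + f 1 :=
  Finset.sum_pair (by decide)
lemma pair_sum23 (f : Fin 4 → ℝ) : ∑ i ∈ ({2,3} : Finset (Fin 4)), f i = f 2 + f 3 :=
  Finset.sum_pair (by decide)

lemma card01 : (({0,1} : Finset (Fin 4)).card : ℝ) = 2 := by norm_num
lemma card23 : (({2,3} : Finset (Fin 4)).card : ℝ) = 2 := by
  rw [show ({2,3} : Finset (Fin 4)).card = 2 from by decide]; norm_num

lemma mean_t : fmean ({0,1} : Finset (Fin 4)) Yt = 13 := by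
  rw [fmean, pair_sum01, card01]; simp [Yt]; norm_num
lemma mean_t' : fmean ({0,1} : Finset (Fin 4)) Yt' = 505 := by
  rw [fmean, pair_sum01, card01]; simp [Yt']; norm_num
lemma mean_c : fmean ({2,3} : Finset (Fin 4)) Yc = 4 := by
  rw [fmean, pair_sum23, card23]; simp [Yc]; norm_num

lemma svar_t : svar ({0,1} : Finset (Fin 4)) Yt = 18 := by
  rw [svar, pair_sum01, mean_t]; simp [Yt]; norm_num
lemma svar_t' : svar ({0,1} : Finset (Fin 4)) Yt' = 490050 := by
  rw [svar, pair_sum01, mean_t']; simp [Yt']; norm_num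
lemma svar_c : svar ({2,3} : Finset (Fin 4)) Yc = 32 := by
  rw [svar, pair_sum23, mean_c]; simp [Yc]; norm_num

lemma tStat_val : tStat myW Yc Yt = 9/5 := by
  rw [tStat, hTset, hCset, mean_t, mean_c, svar_t, svar_c, card01, card23]
  rw [show (18:ℝ)/2 + 32/2 = 25 by norm_num]
  rw [show (25:ℝ) = 5^2 by norm_num, Real.sqrt_sq (by norm_num)]
  norm_num

lemma tStat_val' : tStat myW Yc Yt' = 501 / Real.sqrt 245041 := by
  rw [tStat, hTset, hCset, mean_t', mean_c, svar_t', svar_c, card01, card23]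
  norm_num

/-- the studentized difference of means is not
effect-increasing: there exist schedules S ⪯ S' (with at least two treated
and two control units and positive sample variances) and an assignment w
with t(w, S) > t(w, S'). -/
theorem studentized_t_not_effect_increasing :
    ∃ (n : ℕ) (w : Fin n → Bool) (Y0 Y1 Y0' Y1' : Fin n → ℝ),
      (∀ i, Y1 i ≤ Y1' i) ∧ (∀ i, Y0' i ≤ Y0 i) ∧
      2 ≤ (univ.filter (fun i => w i = true)).card ∧
      2 ≤ (univ.filter (fun i => w i = false)).card ∧
      0 < svar (univ.filter (fun i => w i = true)) Y1 ∧
      0 < svar (univ.filter (fun i => w i = false)) Y0 ∧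
      0 < svar (univ.filter (fun i => w i = true)) Y1' ∧
      0 < svar (univ.filter (fun i => w i = false)) Y0' ∧
      tStat w Y0' Y1' < tStat w Y0 Y1 := by
  refine ⟨4, myW, Yc, Yt, Yc, Yt', ?_, ?_, ?_, ?_, ?_, ?_, ?_, ?_, ?_⟩
  · intro i; fin_cases i <;> simp [Yt, Yt'] <;> norm_num
  · intro i; exact le_refl _
  · rw [hTset]; norm_num
  · rw [hCset]; decide
  · rw [hTset, svar_t]; norm_num
  · rw [hCset, svar_c]; norm_num
  · rw [hTset, svar_t']; norm_num
  · rw [hCset, svar_c]; norm_num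
  · rw [tStat_val, tStat_val']
    have h1 : (495:ℝ) < Real.sqrt 245041 := by
      rw [show (495:ℝ) = Real.sqrt (495^2) by rw [Real.sqrt_sq]; norm_num]
      exact Real.sqrt_lt_sqrt (by positivity) (by norm_num)
    have h2 : (501:ℝ) / Real.sqrt 245041 < 501/495 :=
      div_lt_div_of_pos_left (by norm_num) (by norm_num) h1
    linarith
end
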